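/- Let ρ_rk2 = (1/2)(Σ0 + x3 Σ3), where Σ0 = (1/2)(1 + u σ3 + v τ3 + z1 σ1τ1 + z2 σ2τ2) and Σ3 = (1/2)(v σ3 + u τ3 − z2 σ1τ1 − z1 σ2τ2 + σ3τ3) with u = cos γ1 cos γ2, v = sin γ1 sin γ2, z1 = sin γ1 cos γ2, z2 = cos γ1 sin γ2. For pure qubit states ρ1, ρ2 with Bloch vectors (a,b,c) and s2, one has tr(ρ_rk2 ρ1⊗ρ2) = (1/4)(1 + c cos γ1 cos γ2 + c x3 sin γ1 sin γ2 + w·s2), where w = (a(cos γ2 sin γ1 − x3 cos γ1 sin γ2), b(−x3 cos γ2 sin γ1 + cos γ1 sin γ2), c x3 + x3 cos γ1 cos γ2 + sin γ1 sin γ2). Hence max over ρ2 of tr(ρ_rk2 ρ1⊗ρ2) = (1/4)(1 + c cos γ1 cos γ2 + c x3 sin γ1 sin γ2 + |w|). -/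
import Mathlib


open Real Matrix Kronecker

noncomputable def pauli1 : Matrix (Fin 2) (Fin 2) ℂ := !![0, 1; 1, 0]
noncomputable def pauli2 : Matrix (Fin 2) (Fin 2) ℂ := !![0, -Complex.I; Complex.I, 0]
noncomputable def pauli3 : Matrix (Fin 2) (Fin 2) ℂ := !![1, 0; 0, -1]

noncomputable def Sigma0 (γ1 γ2 : ℝ) : Matrix (Fin 2 × Fin 2) (Fin 2 × Fin 2) ℂ :=
  (1/2 : ℂ) • (1 + ((Real.cos γ1 * Real.cos γ2 : ℝ) : ℂ) • (pauli3 ⊗ₖ 1)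
    + ((Real.sin γ1 * Real.sin γ2 : ℝ) : ℂ) • ((1 : Matrix (Fin 2) (Fin 2) ℂ) ⊗ₖ pauli3)
    + ((Real.sin γ1 * Real.cos γ2 : ℝ) : ℂ) • (pauli1 ⊗ₖ pauli1)
    + ((Real.cos γ1 * Real.sin γ2 : ℝ) : ℂ) • (pauli2 ⊗ₖ pauli2))

noncomputable def Sigma3 (γ1 γ2 : ℝ) : Matrix (Fin 2 × Fin 2) (Fin 2 × Fin 2) ℂ :=
  (1/2 : ℂ) • (((Real.sin γ1 * Real.sin γ2 : ℝ) : ℂ) • (pauli3 ⊗ₖ 1)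
    + ((Real.cos γ1 * Real.cos γ2 : ℝ) : ℂ) • ((1 : Matrix (Fin 2) (Fin 2) ℂ) ⊗ₖ pauli3)
    - ((Real.cos γ1 * Real.sin γ2 : ℝ) : ℂ) • (pauli1 ⊗ₖ pauli1)
    - ((Real.sin γ1 * Real.cos γ2 : ℝ) : ℂ) • (pauli2 ⊗ₖ pauli2)
    + pauli3 ⊗ₖ pauli3)

/-- The rank-two state with Bloch vector `(0,0,x3)` in the canonical subspace. -/
noncomputable def rhoRk2 (γ1 γ2 x3 : ℝ) : Matrix (Fin 2 × Fin 2) (Fin 2 × Fin 2) ℂ :=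
  (1/2 : ℂ) • (Sigma0 γ1 γ2 + (x3 : ℂ) • Sigma3 γ1 γ2)

/-- The qubit state with Bloch vector `(a,b,c)`. -/
noncomputable def qubit (a b c : ℝ) : Matrix (Fin 2) (Fin 2) ℂ :=
  (1/2 : ℂ) • (1 + (a : ℂ) • pauli1 + (b : ℂ) • pauli2 + (c : ℂ) • pauli3)

set_option maxHeartbeats 2000000 in
lemma trace_eq (γ1 γ2 x3 a b c a2 b2 c2 : ℝ) :
    Matrix.trace (rhoRk2 γ1 γ2 x3 * (qubit a b c ⊗ₖ qubit a2 b2 c2))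
      = (((1/4) * (1 + c * Real.cos γ1 * Real.cos γ2 + c * x3 * Real.sin γ1 * Real.sin γ2
          + ((a * (Real.cos γ2 * Real.sin γ1 - x3 * Real.cos γ1 * Real.sin γ2)) * a2
            + (b * (-(x3 * Real.cos γ2 * Real.sin γ1) + Real.cos γ1 * Real.sin γ2)) * b2
            + (c * x3 + x3 * Real.cos γ1 * Real.cos γ2 + Real.sin γ1 * Real.sin γ2) * c2)) : ℝ) : ℂ) := by
  simp only [rhoRk2, Sigma0, Sigma3, qubit, pauli1, pauli2, pauli3, Matrix.trace,
    Matrix.diag, Matrix.mul_apply, Fintype.sum_prod_type, Fin.sum_univ_two,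
    Matrix.kroneckerMap_apply, Matrix.smul_apply, Matrix.add_apply, Matrix.sub_apply,
    Matrix.one_apply, Matrix.cons_val', Matrix.cons_val_zero, Matrix.cons_val_one,
    Matrix.head_cons, Matrix.head_fin_const, Matrix.empty_val', Matrix.cons_val_fin_one]
  push_cast
  simp [Complex.ext_iff, Prod.ext_iff]
  constructor <;> ring_nf

lemma dot_le_sqrt (w1 w2 w3 a2 b2 c2 : ℝ) (h : a2^2 + b2^2 + c2^2 = 1) :
    w1 * a2 + w2 * b2 + w3 * c2 ≤ Real.sqrt (w1^2 + w2^2 + w3^2) := by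
  have hS : (0:ℝ) ≤ w1^2 + w2^2 + w3^2 := by positivity
  have hW : Real.sqrt (w1^2 + w2^2 + w3^2) ^ 2 = w1^2 + w2^2 + w3^2 := Real.sq_sqrt hS
  have hW0 : 0 ≤ Real.sqrt (w1^2 + w2^2 + w3^2) := Real.sqrt_nonneg _
  nlinarith [sq_nonneg (w1*b2 - w2*a2), sq_nonneg (w1*c2 - w3*a2), sq_nonneg (w2*c2 - w3*b2),
    sq_nonneg (w1 * a2 + w2 * b2 + w3 * c2 - Real.sqrt (w1^2 + w2^2 + w3^2)),
    sq_nonneg (w1 * a2 + w2 * b2 + w3 * c2 + Real.sqrt (w1^2 + w2^2 + w3^2))]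

lemma exists_unit_dot (w1 w2 w3 : ℝ) :
    ∃ a2 b2 c2 : ℝ, a2^2 + b2^2 + c2^2 = 1 ∧
      w1 * a2 + w2 * b2 + w3 * c2 = Real.sqrt (w1^2 + w2^2 + w3^2) := by
  rcases eq_or_ne (w1^2 + w2^2 + w3^2) 0 with h0 | h0
  · refine ⟨0, 0, 1, by norm_num, ?_⟩
    have h1 : w1 = 0 := by nlinarith [sq_nonneg w1, sq_nonneg w2, sq_nonneg w3]
    have h2 : w2 = 0 := by nlinarith [sq_nonneg w1, sq_nonneg w2, sq_nonneg w3]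
    have h3 : w3 = 0 := by nlinarith [sq_nonneg w1, sq_nonneg w2, sq_nonneg w3]
    simp [h1, h2, h3, h0]
  · have hS : (0:ℝ) < w1^2 + w2^2 + w3^2 := lt_of_le_of_ne (by positivity) (Ne.symm h0)
    set W := Real.sqrt (w1^2 + w2^2 + w3^2) with hWdef
    have hW2 : W ^ 2 = w1^2 + w2^2 + w3^2 := Real.sq_sqrt hS.le
    have hW0 : 0 < W := Real.sqrt_pos.mpr hS
    refine ⟨w1 / W, w2 / W, w3 / W, ?_, ?_⟩
    · field_simp
      linarith [hW2]
    · field_simp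
      linarith [hW2]

theorem stmt16 (γ1 γ2 x3 a b c : ℝ) (hs1 : a^2 + b^2 + c^2 = 1) :
    let w1 := a * (Real.cos γ2 * Real.sin γ1 - x3 * Real.cos γ1 * Real.sin γ2)
    let w2 := b * (-(x3 * Real.cos γ2 * Real.sin γ1) + Real.cos γ1 * Real.sin γ2)
    let w3 := c * x3 + x3 * Real.cos γ1 * Real.cos γ2 + Real.sin γ1 * Real.sin γ2
    ((∀ a2 b2 c2 : ℝ, a2^2 + b2^2 + c2^2 = 1 →
        Matrix.trace (rhoRk2 γ1 γ2 x3 * (qubit a b c ⊗ₖ qubit a2 b2 c2))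
          = (((1/4) * (1 + c * Real.cos γ1 * Real.cos γ2 + c * x3 * Real.sin γ1 * Real.sin γ2
              + (w1 * a2 + w2 * b2 + w3 * c2)) : ℝ) : ℂ)) ∧
      IsGreatest {x : ℝ | ∃ a2 b2 c2 : ℝ, a2^2 + b2^2 + c2^2 = 1 ∧
          (x : ℂ) = Matrix.trace (rhoRk2 γ1 γ2 x3 * (qubit a b c ⊗ₖ qubit a2 b2 c2))}
        ((1/4) * (1 + c * Real.cos γ1 * Real.cos γ2 + c * x3 * Real.sin γ1 * Real.sin γ2
          + Real.sqrt (w1^2 + w2^2 + w3^2)))) := by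

  intro w1 w2 w3
  refine ⟨fun a2 b2 c2 _ => trace_eq γ1 γ2 x3 a b c a2 b2 c2, ?_, ?_⟩
  · obtain ⟨a2, b2, c2, hu, hd⟩ := exists_unit_dot w1 w2 w3
    exact ⟨a2, b2, c2, hu, by rw [trace_eq γ1 γ2 x3 a b c a2 b2 c2, hd]⟩
  · rintro x ⟨a2, b2, c2, hu, hx⟩
    rw [trace_eq γ1 γ2 x3 a b c a2 b2 c2, Complex.ofReal_inj] at hx
    have := dot_le_sqrt w1 w2 w3 a2 b2 c2 hu
    unfold w1 w2 w3 at this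
    rw [hx]
    linarith
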